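/- Let a₁,…,aₙ, b₁,…,bₙ ∈ A and set ω₁ := Σⱼ π(aⱼ)∘[D, π(bⱼ)]_σ, ω̂₁ := Σⱼ âⱼ∘[D, b̂ⱼ]_{σ°}, ω₂ := Σⱼ âⱼ∘[ω₁, b̂ⱼ]_{σ°} and D_ω := D + ω₁ + ω̂₁ + ω₂. Then the non-linear term satisfies J∘ω₂ = ε'·(ω₂∘J), and consequently the twisted-fluctuated operator is compatible with the real structure: J∘D_ω = ε'·(D_ω∘J). (This is the statement that (A, H, D_ω) together with σ, Γ and J retains all the properties of a real twisted spectral triple except possibly the twisted first-order condition.) -/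
import Mathlib


/-- Conjugation `T ↦ J ∘ T ∘ J⁻¹` of a `ℂ`-linear endomorphism by a conjugate-linear
equivalence `J`; applied to `π(a)` it gives the "hat" `â = J∘π(a)∘J⁻¹`. -/
noncomputable def hatConj {V : Type*} [AddCommGroup V] [Module ℂ V]
    (J : V ≃ₗ⋆[ℂ] V) (T : Module.End ℂ V) : Module.End ℂ V where
  toFun x := J (T (J.symm x))
  map_add' x y := by simp
  map_smul' c x := by
    simp only [LinearEquiv.map_smulₛₗ, LinearMap.map_smulₛₗ, RingHom.id_apply,
      map_smulₛₗ, starRingEnd_self_apply]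

/-- The non-linear term `ω₂ = Σⱼ âⱼ ∘ [ω₁, b̂ⱼ]_{σ°}`, with
`ω₁ = Σₖ π(aₖ)[D,π(bₖ)]_σ`. -/
noncomputable def omegaTwo {V A : Type*} [AddCommGroup V] [Module ℂ V]
    [Ring A] [Algebra ℂ A] (J : V ≃ₗ⋆[ℂ] V) (π : A →ₐ[ℂ] Module.End ℂ V)
    (σ : A ≃ₐ[ℂ] A) (D : Module.End ℂ V) {n : ℕ} (a b : Fin n → A) : Module.End ℂ V :=
  ∑ j, hatConj J (π (a j)) *
    ((∑ k, π (a k) * (D * π (b k) - π (σ (b k)) * D)) * hatConj J (π (b j))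
      - hatConj J (π (σ (b j))) * (∑ k, π (a k) * (D * π (b k) - π (σ (b k)) * D)))

/-- The twisted-fluctuated Dirac operator `D_ω = D + ω₁ + ω̂₁ + ω₂`. -/
noncomputable def twistedFluct {V A : Type*} [AddCommGroup V] [Module ℂ V]
    [Ring A] [Algebra ℂ A] (J : V ≃ₗ⋆[ℂ] V) (π : A →ₐ[ℂ] Module.End ℂ V)
    (σ : A ≃ₐ[ℂ] A) (D : Module.End ℂ V) {n : ℕ} (a b : Fin n → A) : Module.End ℂ V :=
  D + (∑ j, π (a j) * (D * π (b j) - π (σ (b j)) * D))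
    + (∑ j, hatConj J (π (a j)) * (D * hatConj J (π (b j)) - hatConj J (π (σ (b j))) * D))
    + omegaTwo J π σ D a b

section Aux
variable {V : Type*} [AddCommGroup V] [Module ℂ V] (J : V ≃ₗ⋆[ℂ] V)

lemma hatConj_apply (T : Module.End ℂ V) (x : V) : hatConj J T x = J (T (J.symm x)) := rfl

lemma hatConj_mul (S T : Module.End ℂ V) :
    hatConj J (S * T) = hatConj J S * hatConj J T := by
  ext x; simp [hatConj_apply, Module.End.mul_apply]

lemma hatConj_sub (S T : Module.End ℂ V) :
    hatConj J (S - T) = hatConj J S - hatConj J T := by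
  ext x; simp [hatConj_apply, LinearMap.sub_apply, map_sub]

lemma hatConj_sum {ι : Type*} (s : Finset ι) (f : ι → Module.End ℂ V) :
    hatConj J (∑ i ∈ s, f i) = ∑ i ∈ s, hatConj J (f i) := by
  ext x; simp [hatConj_apply, LinearMap.sum_apply]

lemma hatConj_smul (c : ℂ) (T : Module.End ℂ V) :
    hatConj J (c • T) = (starRingEnd ℂ c) • hatConj J T := by
  ext x; simp [hatConj_apply, LinearMap.smul_apply, map_smulₛₗ]

end Aux

lemma lswap {R : Type*} [Ring R] {p q : R} (h : p * q = q * p) (M : R) :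
    p * (q * M) = q * (p * M) := by rw [← mul_assoc, h, mul_assoc]

lemma perterm {R : Type*} [Ring R] (D x y z X Y Z : R)
    (hxX : x * X = X * x) (hyY : y * Y = Y * y) (hxZ : x * Z = Z * x)
    (hzX : z * X = X * z) (hzZ : z * Z = Z * z) :
    x * (X * (D * Y - Z * D) * y - z * (X * (D * Y - Z * D)))
      = X * (x * (D * y - z * D) * Y - Z * (x * (D * y - z * D))) := by
  simp only [mul_sub, sub_mul, mul_assoc]
  simp only [hyY, lswap hzX, lswap hzZ, lswap hxX, lswap hxZ]
  abel

lemma keysum {R : Type*} [Ring R] {n : ℕ} (D : R) (x y z X Y Z : Fin n → R)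
    (hxX : ∀ i j, x i * X j = X j * x i)
    (hyY : ∀ i j, y i * Y j = Y j * y i)
    (hxZ : ∀ i j, x i * Z j = Z j * x i)
    (hzX : ∀ i j, z i * X j = X j * z i)
    (hzZ : ∀ i j, z i * Z j = Z j * z i) :
    ∑ j, x j * ((∑ k, X k * (D * Y k - Z k * D)) * y j
        - z j * (∑ k, X k * (D * Y k - Z k * D)))
      = ∑ j, X j * ((∑ k, x k * (D * y k - z k * D)) * Y j
        - Z j * (∑ k, x k * (D * y k - z k * D))) := by
  calc ∑ j, x j * ((∑ k, X k * (D * Y k - Z k * D)) * y j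
        - z j * (∑ k, X k * (D * Y k - Z k * D)))
      = ∑ j, ∑ k, x j * ((X k * (D * Y k - Z k * D)) * y j
          - z j * (X k * (D * Y k - Z k * D))) := by
        refine Finset.sum_congr rfl fun j _ => ?_
        rw [Finset.sum_mul, Finset.mul_sum, ← Finset.sum_sub_distrib, Finset.mul_sum]
    _ = ∑ j, ∑ k, X k * ((x j * (D * y j - z j * D)) * Y k
          - Z k * (x j * (D * y j - z j * D))) :=
        Finset.sum_congr rfl fun j _ => Finset.sum_congr rfl fun k _ =>
          perterm D (x j) (y j) (z j) (X k) (Y k) (Z k)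
            (hxX j k) (hyY j k) (hxZ j k) (hzX j k) (hzZ j k)
    _ = ∑ j, X j * ((∑ k, x k * (D * y k - z k * D)) * Y j
          - Z j * (∑ k, x k * (D * y k - z k * D))) := by
        rw [Finset.sum_comm]
        refine Finset.sum_congr rfl fun j _ => ?_
        rw [Finset.sum_mul, Finset.mul_sum, ← Finset.sum_sub_distrib, Finset.mul_sum]

/-- the non-linear term satisfies `J∘ω₂ = ε'·(ω₂∘J)`, and consequently the
twisted-fluctuated operator is compatible with the real structure:
`J∘D_ω = ε'·(D_ω∘J)`. -/
theorem fluctuated_compatible_with_real_structure {V A : Type*} [AddCommGroup V] [Module ℂ V]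
    [Ring A] [Algebra ℂ A] [StarRing A]
    (π : A →ₐ[ℂ] Module.End ℂ V) (J : V ≃ₗ⋆[ℂ] V)
    (ε : ℂ) (hε : ε = 1 ∨ ε = -1) (hJJ : ∀ v : V, J (J v) = ε • v)
    (σ : A ≃ₐ[ℂ] A) (hreg : ∀ a : A, σ (star a) = star (σ.symm a))
    (hzero : ∀ a b : A, π a * hatConj J (π b) = hatConj J (π b) * π a)
    (D : Module.End ℂ V) (ε' : ℂ) (hε' : ε' = 1 ∨ ε' = -1)
    (hJD : ∀ v : V, J (D v) = ε' • D (J v))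
    (n : ℕ) (a b : Fin n → A) :
    (∀ v : V, J (omegaTwo J π σ D a b v) = ε' • omegaTwo J π σ D a b (J v)) ∧
    (∀ v : V, J (twistedFluct J π σ D a b v) = ε' • twistedFluct J π σ D a b (J v)) := by
  have hstar : starRingEnd ℂ ε = ε := by rcases hε with rfl | rfl <;> simp
  have hsq : ε * ε = 1 := by rcases hε with rfl | rfl <;> norm_num
  have hstar' : starRingEnd ℂ ε' = ε' := by rcases hε' with rfl | rfl <;> simp
  have hsq' : ε' * ε' = 1 := by rcases hε' with rfl | rfl <;> norm_num
  have hsymm : ∀ v : V, J.symm (J.symm v) = ε • v := by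
    intro v
    have h := hJJ (J.symm (J.symm v))
    rw [LinearEquiv.apply_symm_apply, LinearEquiv.apply_symm_apply] at h
    calc J.symm (J.symm v) = (ε * ε) • J.symm (J.symm v) := by rw [hsq, one_smul]
      _ = ε • (ε • J.symm (J.symm v)) := by rw [mul_smul]
      _ = ε • v := by rw [← h]
  have hCD : hatConj J D = ε' • D := by
    ext v
    rw [hatConj_apply, hJD, LinearEquiv.apply_symm_apply, LinearMap.smul_apply]
  have hCC : ∀ T : Module.End ℂ V, hatConj J (hatConj J T) = T := by
    intro T; ext v
    rw [hatConj_apply, hatConj_apply, hsymm, map_smul, LinearEquiv.map_smulₛₗ, hstar,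
      LinearEquiv.map_smulₛₗ, hstar, hJJ, smul_smul, hsq, one_smul]
  -- abbreviations
  set x : Fin n → Module.End ℂ V := fun j => π (a j) with hx
  set y : Fin n → Module.End ℂ V := fun j => π (b j) with hy
  set z : Fin n → Module.End ℂ V := fun j => π (σ (b j)) with hz
  set X : Fin n → Module.End ℂ V := fun j => hatConj J (π (a j)) with hX
  set Y : Fin n → Module.End ℂ V := fun j => hatConj J (π (b j)) with hY
  set Z : Fin n → Module.End ℂ V := fun j => hatConj J (π (σ (b j))) with hZ
  set ω₁ : Module.End ℂ V := ∑ j, x j * (D * y j - z j * D) with hω₁def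
  set ω₁h : Module.End ℂ V := ∑ j, X j * (D * Y j - Z j * D) with hω₁hdef
  have hω1 : hatConj J ω₁ = ε' • ω₁h := by
    rw [hω₁def, hatConj_sum, hω₁hdef, Finset.smul_sum]
    refine Finset.sum_congr rfl fun j _ => ?_
    rw [hatConj_mul, hatConj_sub, hatConj_mul, hatConj_mul, hCD,
      smul_mul_assoc, mul_smul_comm, ← smul_sub, mul_smul_comm]
  have hω1' : hatConj J ω₁h = ε' • ω₁ := by
    have h := congrArg (hatConj J) hω1
    rw [hCC, hatConj_smul, hstar'] at h
    calc hatConj J ω₁h = (ε' * ε') • hatConj J ω₁h := by rw [hsq', one_smul]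
      _ = ε' • (ε' • hatConj J ω₁h) := by rw [mul_smul]
      _ = ε' • ω₁ := by rw [← h]
  have hcomm : ∀ (c d : A), π c * hatConj J (π d) = hatConj J (π d) * π c := hzero
  have hω2def : omegaTwo J π σ D a b = ∑ j, X j * (ω₁ * Y j - Z j * ω₁) := rfl
  have hω2 : hatConj J (omegaTwo J π σ D a b) = ε' • omegaTwo J π σ D a b := by
    rw [hω2def, hatConj_sum]
    have step : ∀ j, hatConj J (X j * (ω₁ * Y j - Z j * ω₁))
        = ε' • (x j * (ω₁h * y j - z j * ω₁h)) := by
      intro j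
      rw [hatConj_mul, hatConj_sub, hatConj_mul, hatConj_mul, hω1]
      rw [hX, hY, hZ]
      simp only [hCC]
      rw [smul_mul_assoc, mul_smul_comm, ← smul_sub, mul_smul_comm]
    rw [Finset.sum_congr rfl fun j _ => step j, ← Finset.smul_sum]
    congr 1
    rw [hω₁hdef]
    rw [keysum D x y z X Y Z (fun i j => hcomm (a i) (a j)) (fun i j => hcomm (b i) (b j))
      (fun i j => hcomm (a i) (σ (b j))) (fun i j => hcomm (σ (b i)) (a j))
      (fun i j => hcomm (σ (b i)) (σ (b j)))]
  have key : ∀ (T S : Module.End ℂ V), hatConj J T = ε' • S →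
      ∀ v : V, J (T v) = ε' • S (J v) := by
    intro T S hT v
    have h := LinearMap.congr_fun hT (J v)
    rw [hatConj_apply, LinearEquiv.symm_apply_apply, LinearMap.smul_apply] at h
    exact h
  refine ⟨key _ _ hω2, ?_⟩
  intro v
  rw [twistedFluct]
  simp only [LinearMap.add_apply, map_add]
  rw [hJD v, key _ _ hω1 v, key _ _ hω1' v, key _ _ hω2 v]
  simp only [smul_add]
  abel
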